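/- Let L be a dually ms Stone semi-Heyting algebra. Then for all x in L, (x*)⁺ = x**, where y⁺ := y′*′. -/
import Mathlib


class SemiHeyting (α : Type*) extends Lattice α, BoundedOrder α where
  himp : α → α → α
  sh1 : ∀ x y : α, x ⊓ himp x y = x ⊓ y
  sh2 : ∀ x y z : α, x ⊓ himp y z = x ⊓ himp (x ⊓ y) (x ⊓ z)
  sh3 : ∀ x : α, himp x x = ⊤

namespace SemiHeyting

variable {α : Type*} [SemiHeyting α]

def star (x : α) : α := himp x ⊥

end SemiHeyting

class DQD (α : Type*) extends SemiHeyting α where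
  prime : α → α
  prime_bot : prime ⊥ = ⊤
  prime_top : prime ⊤ = ⊥
  prime_inf : ∀ x y : α, prime (x ⊓ y) = prime x ⊔ prime y
  prime_prime_sup : ∀ x y : α, prime (prime (x ⊔ y)) = prime (prime x) ⊔ prime (prime y)
  prime_prime_le : ∀ x : α, prime (prime x) ≤ x

class DmsSt (α : Type*) extends DQD α where
  stone : ∀ x : α, SemiHeyting.star x ⊔ SemiHeyting.star (SemiHeyting.star x) = ⊤
  jdm : ∀ x y : α, prime (x ⊔ y) = prime x ⊓ prime y

open SemiHeyting DQD

section Aux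

variable {α : Type*} [SemiHeyting α]

/-- If x ⊓ y = x ⊓ z then x ≤ y → z. -/
lemma aux_le_himp {x y z : α} (h : x ⊓ y = x ⊓ z) : x ≤ SemiHeyting.himp y z := by
  have h2 := SemiHeyting.sh2 x y z
  rw [h, SemiHeyting.sh3, inf_top_eq] at h2
  exact le_of_eq h2.symm |>.trans inf_le_right

/-- x ⊓ x* = ⊥ -/
lemma aux_inf_star (x : α) : x ⊓ SemiHeyting.star x = ⊥ := by
  unfold SemiHeyting.star
  rw [SemiHeyting.sh1, inf_bot_eq]

/-- if y ⊓ x = ⊥ then y ≤ x* -/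
lemma aux_le_star {x y : α} (h : y ⊓ x = ⊥) : y ≤ SemiHeyting.star x := by
  apply aux_le_himp
  rw [h, inf_bot_eq]

/-- Semi-Heyting algebras are distributive. -/
lemma aux_distrib (x y z : α) : x ⊓ (y ⊔ z) ≤ (x ⊓ y) ⊔ (x ⊓ z) := by
  set v := (x ⊓ y) ⊔ (x ⊓ z) with hv
  have hy : y ≤ SemiHeyting.himp x v := by
    apply aux_le_himp
    apply le_antisymm
    · exact le_inf inf_le_left (inf_comm x y ▸ le_sup_left)
    · exact inf_le_inf_left y (sup_le inf_le_left inf_le_left)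
  have hz : z ≤ SemiHeyting.himp x v := by
    apply aux_le_himp
    apply le_antisymm
    · exact le_inf inf_le_left (inf_comm x z ▸ le_sup_right)
    · exact inf_le_inf_left z (sup_le inf_le_left inf_le_left)
  calc x ⊓ (y ⊔ z) ≤ x ⊓ SemiHeyting.himp x v :=
        inf_le_inf_left x (sup_le hy hz)
    _ = x ⊓ v := SemiHeyting.sh1 x v
    _ ≤ v := inf_le_right

end Aux

section AuxDQD

variable {α : Type*} [DQD α]

lemma aux_prime_anti {x y : α} (h : x ≤ y) : DQD.prime y ≤ DQD.prime x := by
  have : DQD.prime (x ⊓ y) = DQD.prime x ⊔ DQD.prime y := DQD.prime_inf x y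
  rw [inf_eq_left.mpr h] at this
  rw [this]
  exact le_sup_right

end AuxDQD

theorem stmt16 {α : Type*} [DmsSt α] (x : α) :
    DQD.prime (SemiHeyting.star (DQD.prime (SemiHeyting.star x)))
      = SemiHeyting.star (SemiHeyting.star x) := by
  set s := SemiHeyting.star x with hs
  set ss := SemiHeyting.star s with hss
  apply le_antisymm
  · -- prime (star (prime s)) ≤ ss
    have h1 : DQD.prime (s ⊔ ss) = ⊥ := by rw [DmsSt.stone x, DQD.prime_top]
    rw [DmsSt.jdm] at h1
    have h2 : DQD.prime ss ≤ SemiHeyting.star (DQD.prime s) :=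
      aux_le_star (by rw [inf_comm]; exact h1)
    calc DQD.prime (SemiHeyting.star (DQD.prime s))
        ≤ DQD.prime (DQD.prime ss) := aux_prime_anti h2
      _ ≤ ss := DQD.prime_prime_le ss
  · -- ss ≤ prime (star (prime s))
    set e := DQD.prime (SemiHeyting.star (DQD.prime s)) with he
    have h3 : SemiHeyting.star (DQD.prime s) ⊓ DQD.prime s = ⊥ :=
      by rw [inf_comm]; exact aux_inf_star (DQD.prime s)
    have h4 : e ⊔ DQD.prime (DQD.prime s) = ⊤ := by
      rw [he, ← DQD.prime_inf, h3, DQD.prime_bot]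
    have h5 : e ⊔ s = ⊤ :=
      top_le_iff.mp (h4 ▸ sup_le_sup_left (DQD.prime_prime_le s) e)
    have h6 : ss ⊓ s = ⊥ := by rw [inf_comm]; exact aux_inf_star s
    calc ss = ss ⊓ (e ⊔ s) := by rw [h5, inf_top_eq]
      _ ≤ (ss ⊓ e) ⊔ (ss ⊓ s) := aux_distrib ss e s
      _ = ss ⊓ e := by rw [h6, sup_bot_eq]
      _ ≤ e := inf_le_right
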